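/- Deterministic invertible translators: if τ₁² ♯ τ₂¹ = id and τ₂¹ ♯ τ₁² = id for Markov kernels τ₁² : L₁ → Δ(L₂) and τ₂¹ : L₂ → Δ(L₁) on countable sets L₁, L₂, then there exists a bijection t : L₁ → L₂ such that τ₁²(y | x) = indicator(y = t(x)) and τ₂¹(x | y) = indicator(x = t⁻¹(y)). -/

import Mathlib

open scoped NNReal

private lemma summable_of_tsum_one {A : Type*} {f : A → ℝ≥0} (h : ∑' a, f a = 1) :
    Summable f := by
  by_contra hs
  rw [tsum_eq_zero_of_not_summable hs] at h
  exact one_ne_zero h.symm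

/-- Key: if κ x y ≠ 0 then μ y x = 1. -/
private lemma key {A B : Type*} [DecidableEq A] (κ : A → B → ℝ≥0) (μ : B → A → ℝ≥0)
    (hκ : ∀ a, ∑' b, κ a b = 1) (hμ : ∀ b, ∑' a, μ b a = 1)
    (hid : ∀ (a c : A), ∑' b : B, μ b c * κ a b = if c = a then 1 else 0)
    {x : A} {y : B} (hxy : κ x y ≠ 0) : μ y x = 1 := by
  have hsκ : Summable (κ x) := summable_of_tsum_one (hκ x)
  have hle : ∀ b : B, μ b x ≤ 1 := fun b => (hμ b) ▸ (summable_of_tsum_one (hμ b)).le_tsum' x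
  have hsf : Summable (fun b => μ b x * κ x b) :=
    NNReal.summable_of_le (fun b => mul_le_of_le_one_left zero_le (hle b)) hsκ
  have hsg : Summable (fun b => (1 - μ b x) * κ x b) :=
    NNReal.summable_of_le (fun b => mul_le_of_le_one_left zero_le tsub_le_self) hsκ
  have hsplit : ∀ b : B, μ b x * κ x b + (1 - μ b x) * κ x b = κ x b := by
    intro b
    rw [← add_mul, add_tsub_cancel_of_le (hle b), one_mul]
  have htot : (∑' b, μ b x * κ x b) + ∑' b, (1 - μ b x) * κ x b = 1 := by
    rw [← hsf.tsum_add hsg]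
    simp_rw [hsplit]
    exact hκ x
  have hone : (∑' b, μ b x * κ x b) = 1 := by simpa using hid x x
  have hzero : (∑' b, (1 - μ b x) * κ x b) = 0 := by
    have := htot
    rw [hone] at this
    exact (add_eq_left).mp this
  have := hsg.tsum_eq_zero_iff.mp hzero y
  have h1 : (1 : ℝ≥0) - μ y x = 0 := by
    rcases mul_eq_zero.mp this with h | h
    · exact h
    · exact absurd h hxy
  exact le_antisymm (hle y) (tsub_eq_zero_iff_le.mp h1)

/-- From κ x y ≠ 0 deduce both kernels are deterministic at (x, y). -/
private lemma key2 {A B : Type*} [DecidableEq A] [DecidableEq B]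
    (κ : A → B → ℝ≥0) (μ : B → A → ℝ≥0)
    (hκ : ∀ a, ∑' b, κ a b = 1) (hμ : ∀ b, ∑' a, μ b a = 1)
    (hid : ∀ (a c : A), ∑' b : B, μ b c * κ a b = if c = a then 1 else 0)
    (hid' : ∀ (a c : B), ∑' b : A, κ b c * μ a b = if c = a then 1 else 0)
    {x : A} {y : B} (hxy : κ x y ≠ 0) :
    (∀ c, μ y c = if c = x then 1 else 0) ∧ (∀ c, κ x c = if c = y then 1 else 0) := by
  have h1 : μ y x = 1 := key κ μ hκ hμ hid hxy
  have hμdet : ∀ c, μ y c = if c = x then 1 else 0 := by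
    intro c
    by_cases hc : c = x
    · simp [hc, h1]
    · simp only [hc, if_false]
      have hs : Summable (μ y) := summable_of_tsum_one (hμ y)
      have hsum : μ y x + μ y c ≤ 1 := by
        have : ∑ i ∈ ({x, c} : Finset A), μ y i ≤ ∑' a, μ y a :=
          hs.sum_le_tsum _ (fun i _ => zero_le)
        rwa [Finset.sum_pair (fun h => hc h.symm), hμ y] at this
      rw [h1] at hsum
      exact le_antisymm (by simpa using hsum) zero_le
  refine ⟨hμdet, fun c => ?_⟩
  have := hid' y c
  rw [tsum_eq_single x (fun b hb => by rw [hμdet b, if_neg hb, mul_zero])] at this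
  rwa [h1, mul_one] at this

theorem stmt_11 {L₁ L₂ : Type*} [Countable L₁] [Countable L₂]
    [DecidableEq L₁] [DecidableEq L₂]
    (τ12 : L₁ → L₂ → ℝ≥0) (τ21 : L₂ → L₁ → ℝ≥0)
    (h12 : ∀ x : L₁, ∑' y, τ12 x y = 1) (h21 : ∀ y : L₂, ∑' x, τ21 y x = 1)
    (hid₂ : ∀ (a c : L₂), ∑' b : L₁, τ12 b c * τ21 a b = if c = a then 1 else 0)
    (hid₁ : ∀ (a c : L₁), ∑' b : L₂, τ21 b c * τ12 a b = if c = a then 1 else 0) :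
    ∃ t : L₁ ≃ L₂,
      (∀ (x : L₁) (y : L₂), τ12 x y = if y = t x then 1 else 0) ∧
      (∀ (y : L₂) (x : L₁), τ21 y x = if x = t.symm y then 1 else 0) := by
  have hex1 : ∀ x : L₁, ∃ y, τ12 x y ≠ 0 := by
    intro x
    by_contra h
    push_neg at h
    have : ∑' y, τ12 x y = 0 := by simp [h]
    rw [h12 x] at this; exact one_ne_zero this
  have hex2 : ∀ y : L₂, ∃ x, τ21 y x ≠ 0 := by
    intro y
    by_contra h
    push_neg at h
    have : ∑' x, τ21 y x = 0 := by simp [h]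
    rw [h21 y] at this; exact one_ne_zero this
  set t : L₁ → L₂ := fun x => (hex1 x).choose with ht
  set s : L₂ → L₁ := fun y => (hex2 y).choose with hs
  have htspec : ∀ x, τ12 x (t x) ≠ 0 := fun x => (hex1 x).choose_spec
  have hsspec : ∀ y, τ21 y (s y) ≠ 0 := fun y => (hex2 y).choose_spec
  have K1 : ∀ x : L₁, (∀ c, τ21 (t x) c = if c = x then 1 else 0) ∧
      (∀ c, τ12 x c = if c = t x then 1 else 0) :=
    fun x => key2 τ12 τ21 h12 h21 hid₁ hid₂ (htspec x)
  have K2 : ∀ y : L₂, (∀ c, τ12 (s y) c = if c = y then 1 else 0) ∧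
      (∀ c, τ21 y c = if c = s y then 1 else 0) :=
    fun y => key2 τ21 τ12 h21 h12 hid₂ hid₁ (hsspec y)
  have hleft : ∀ x, s (t x) = x := by
    intro x
    have h := (K2 (t x)).2 (s (t x))
    rw [if_pos rfl] at h
    have h' := (K1 x).1 (s (t x))
    rw [h] at h'
    by_contra hne
    rw [if_neg hne] at h'
    exact one_ne_zero h'
  have hright : ∀ y, t (s y) = y := by
    intro y
    have h := (K1 (s y)).2 (t (s y))
    rw [if_pos rfl] at h
    have h' := (K2 y).1 (t (s y))
    rw [h] at h'
    by_contra hne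
    rw [if_neg hne] at h'
    exact one_ne_zero h'
  refine ⟨⟨t, s, hleft, hright⟩, fun x y => (K1 x).2 y, fun y x => (K2 y).2 x⟩
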